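/- Let C be a unital C*-algebra, let α be a *-automorphism of C, and let J be a closed two-sided ideal of C with {0} ≠ J ≠ C. Assume that for every k ∈ ℤ \ {0} there exists f ∈ C with 0 ≤ f ≤ 1 such that α^{-k}(f) ∈ J, 1 − f ∈ J, and f c α^{-k}(f) = 0 for all c ∈ C. Then for every n ∈ ℤ_{>0} there exists a closed two-sided ideal I ⊆ ⋂_{k=1}^n α^{-k}(J) such that the ideals α^{-n}(I), α^{-n+1}(I), …, α^{n}(I) are pairwise orthogonal and J + I = C. -/

import Mathlib

/-- The `n`-th iterate (`n ∈ ℤ`) of a *-automorphism `α`, using inverse iterates for `n < 0`. -/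
def zpowIter {C : Type*} [CStarAlgebra C] (α : C ≃⋆ₐ[ℂ] C) (n : ℤ) : C → C :=
  if 0 ≤ n then (⇑α)^[n.toNat] else (⇑α.symm)^[(-n).toNat]

section Helpers

variable {C : Type*} [CStarAlgebra C] (α : C ≃⋆ₐ[ℂ] C)

private lemma iterMul (g : C ≃⋆ₐ[ℂ] C) (k : ℕ) (x y : C) :
    (⇑g)^[k] (x * y) = (⇑g)^[k] x * (⇑g)^[k] y := by
  induction k generalizing x y with
  | zero => simp
  | succ k ih => simp only [Function.iterate_succ_apply, map_mul]; exact ih _ _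

private lemma iterAdd (g : C ≃⋆ₐ[ℂ] C) (k : ℕ) (x y : C) :
    (⇑g)^[k] (x + y) = (⇑g)^[k] x + (⇑g)^[k] y := by
  induction k generalizing x y with
  | zero => simp
  | succ k ih => simp only [Function.iterate_succ_apply, map_add]; exact ih _ _

private lemma iterZero (g : C ≃⋆ₐ[ℂ] C) (k : ℕ) : (⇑g)^[k] (0 : C) = 0 :=
  Function.iterate_fixed (map_zero g) k

private lemma iterStar (g : C ≃⋆ₐ[ℂ] C) (k : ℕ) (x : C) :
    (⇑g)^[k] (star x) = star ((⇑g)^[k] x) := by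
  induction k generalizing x with
  | zero => simp
  | succ k ih => simp only [Function.iterate_succ_apply, map_star]; exact ih _

lemma zpI_mul (j : ℤ) (x y : C) :
    zpowIter α j (x * y) = zpowIter α j x * zpowIter α j y := by
  unfold zpowIter; split_ifs <;> apply iterMul

lemma zpI_add (j : ℤ) (x y : C) :
    zpowIter α j (x + y) = zpowIter α j x + zpowIter α j y := by
  unfold zpowIter; split_ifs <;> apply iterAdd

lemma zpI_zero (j : ℤ) : zpowIter α j (0 : C) = 0 := by
  unfold zpowIter; split_ifs <;> apply iterZero

lemma zpI_star (j : ℤ) (x : C) : zpowIter α j (star x) = star (zpowIter α j x) := by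
  unfold zpowIter; split_ifs <;> apply iterStar

lemma zpI_cont (j : ℤ) : Continuous (zpowIter α j) := by
  unfold zpowIter; split_ifs
  · exact (StarAlgEquiv.isometry α).continuous.iterate _
  · exact (StarAlgEquiv.isometry α.symm).continuous.iterate _

private lemma iterCancelA (k : ℕ) (x : C) : (⇑α)^[k] ((⇑α.symm)^[k] x) = x :=
  (Function.LeftInverse.iterate (fun y => α.apply_symm_apply y) k) x

private lemma iterCancelB (k : ℕ) (x : C) : (⇑α.symm)^[k] ((⇑α)^[k] x) = x :=
  (Function.LeftInverse.iterate (fun y => α.symm_apply_apply y) k) x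

private lemma commBA (b a : ℕ) (x : C) :
    (⇑α.symm)^[b] ((⇑α)^[a] x) = (⇑α)^[a] ((⇑α.symm)^[b] x) := by
  have h : Function.Commute (⇑α.symm) (⇑α) := fun y => by
    rw [α.symm_apply_apply, α.apply_symm_apply]
  exact (h.iterate_iterate b a) x

private lemma zpI_decomp (j : ℤ) (x : C) :
    zpowIter α j x = (⇑α)^[j.toNat] ((⇑α.symm)^[(-j).toNat] x) := by
  unfold zpowIter; split_ifs with h
  · rw [show (-j).toNat = 0 from by omega]; simp
  · rw [show j.toNat = 0 from by omega]; simp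

private lemma zpI_AB (a b : ℕ) (x : C) :
    (⇑α)^[a] ((⇑α.symm)^[b] x) = zpowIter α ((a : ℤ) - b) x := by
  rcases le_or_gt b a with h | h
  · have h0 : 0 ≤ (a : ℤ) - b := by omega
    have ht : ((a : ℤ) - (b : ℤ)).toNat = a - b := by omega
    simp only [zpowIter, if_pos h0, ht]
    conv_lhs => rw [show a = (a - b) + b from by omega]
    rw [Function.iterate_add_apply, iterCancelA]
  · have h0 : ¬ (0 ≤ (a : ℤ) - b) := by omega
    have ht : (-((a : ℤ) - (b : ℤ))).toNat = b - a := by omega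
    simp only [zpowIter, if_neg h0, ht]
    conv_lhs => rw [show b = a + (b - a) from by omega]
    rw [Function.iterate_add_apply, iterCancelA]

lemma zpI_comp (j m : ℤ) (x : C) :
    zpowIter α j (zpowIter α m x) = zpowIter α (j + m) x := by
  rw [zpI_decomp α j, zpI_decomp α m, commBA, ← Function.iterate_add_apply,
    ← Function.iterate_add_apply, zpI_AB]
  congr 1
  omega

lemma zpI_natCast (k : ℕ) (x : C) : zpowIter α (k : ℤ) x = (⇑α)^[k] x := by
  unfold zpowIter
  rw [if_pos (Int.natCast_nonneg k), Int.toNat_natCast]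

lemma zpI_id (x : C) : zpowIter α 0 x = x := by
  simpa using zpI_natCast α 0 x

lemma zpI_surj (j : ℤ) : Function.Surjective (zpowIter α j) := fun x =>
  ⟨zpowIter α (-j) x, by rw [zpI_comp, add_neg_cancel, zpI_id]⟩

end Helpers

/-- Let `C` be a unital C*-algebra, `α` a *-automorphism of `C`, and `J` a
nontrivial closed two-sided ideal of `C`.  Assume that for every `k ∈ ℤ \ {0}` there is
`f ∈ C` with `0 ≤ f ≤ 1` such that `α⁻ᵏ(f) ∈ J`, `1 - f ∈ J`, and `f c α⁻ᵏ(f) = 0` for all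
`c ∈ C`.  Then for every `n > 0` there is a closed two-sided ideal
`I ⊆ ⋂_{k=1}^n α⁻ᵏ(J)` such that the ideals `α⁻ⁿ(I), …, αⁿ(I)` are pairwise orthogonal and
`J + I = C`. -/
theorem exists_orthogonal_ideal_complementing
    {C : Type*} [CStarAlgebra C] [PartialOrder C] [StarOrderedRing C]
    (α : C ≃⋆ₐ[ℂ] C) (J : TwoSidedIdeal C)
    (hJclosed : IsClosed (J : Set C)) (hJbot : J ≠ ⊥) (hJtop : J ≠ ⊤)
    (hyp : ∀ k : ℤ, k ≠ 0 → ∃ f : C, 0 ≤ f ∧ f ≤ 1 ∧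
      zpowIter α (-k) f ∈ J ∧ 1 - f ∈ J ∧ ∀ c : C, f * c * zpowIter α (-k) f = 0) :
    ∀ n : ℕ, 0 < n → ∃ I : TwoSidedIdeal C, IsClosed (I : Set C) ∧
      (I : Set C) ⊆ ⋂ k ∈ Finset.Icc 1 n, (⇑α.symm)^[k] '' (J : Set C) ∧
      (∀ j k : ℤ, -(n : ℤ) ≤ j → j ≤ n → -(n : ℤ) ≤ k → k ≤ n → j ≠ k →
        ∀ a ∈ zpowIter α j '' (I : Set C), ∀ b ∈ zpowIter α k '' (I : Set C), a * b = 0) ∧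
      (∀ c : C, ∃ a ∈ J, ∃ b ∈ I, a + b = c) := by
  intro n hn
  classical
  -- choose the elements `f i` corresponding to `k = i + 1`
  have hch : ∀ i : ℕ, ∃ f : C, 0 ≤ f ∧ f ≤ 1 ∧ zpowIter α ((i : ℤ) + 1) f ∈ J ∧
      1 - f ∈ J ∧ ∀ c : C, f * c * zpowIter α ((i : ℤ) + 1) f = 0 := by
    intro i
    obtain ⟨f, h0, h1, h2, h3, h4⟩ := hyp (-((i : ℤ) + 1)) (by omega)
    simp only [neg_neg] at h2 h4
    exact ⟨f, h0, h1, h2, h3, h4⟩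
  choose f hf0 hf1 hfJ hfsub horth using hch
  -- orthogonality also holds for the negative power
  have horthneg : ∀ (i : ℕ) (c : C),
      f i * c * zpowIter α (-((i : ℤ) + 1)) (f i) = 0 := by
    intro i c
    have step : ∀ d : C, zpowIter α (-((i : ℤ) + 1)) (f i) * d * f i = 0 := by
      intro d
      obtain ⟨c', rfl⟩ := zpI_surj α (-((i : ℤ) + 1)) d
      have h2 := congrArg (zpowIter α (-((i : ℤ) + 1))) (horth i c')
      rw [zpI_mul, zpI_mul, zpI_comp, zpI_zero,
        show -((i : ℤ) + 1) + ((i : ℤ) + 1) = 0 from by ring, zpI_id] at h2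
      exact h2
    have hsaf : IsSelfAdjoint (f i) := .of_nonneg (hf0 i)
    have hsam : IsSelfAdjoint (zpowIter α (-((i : ℤ) + 1)) (f i)) := by
      rw [IsSelfAdjoint, ← zpI_star, hsaf.star_eq]
    calc f i * c * zpowIter α (-((i : ℤ) + 1)) (f i)
        = star (zpowIter α (-((i : ℤ) + 1)) (f i) * star c * f i) := by
          rw [star_mul, star_mul, star_star, hsaf.star_eq, hsam.star_eq, mul_assoc]
      _ = 0 := by rw [step, star_zero]
  -- uniform version
  have hforth : ∀ (i : ℕ) (m : ℤ), m.natAbs = i + 1 → ∀ c : C,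
      f i * c * zpowIter α m (f i) = 0 := by
    intro i m hm c
    rcases le_or_gt 0 m with h | h
    · rw [show m = (i : ℤ) + 1 from by omega]; exact horth i c
    · rw [show m = -((i : ℤ) + 1) from by omega]; exact horthneg i c
  -- the product
  set l : List C := (List.range (2 * n)).map f with hl
  set p : C := l.prod with hp
  have hsplit : ∀ i < 2 * n, ∃ A B : C, p = A * f i * B := by
    intro i hi
    have hlen : i < l.length := by simp [hl, hi]
    refine ⟨(l.take i).prod, (l.drop (i + 1)).prod, ?_⟩
    have h1 : l.prod = (l.take i).prod * (l.drop i).prod :=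
      (List.prod_take_mul_prod_drop l i).symm
    have h2 : l[i] = f i := by simp [hl]
    rw [hp, h1, List.drop_eq_getElem_cons hlen, List.prod_cons, ← mul_assoc, h2]
  -- `1 - p ∈ J`
  have honeList : ∀ L : List C, (∀ x ∈ L, 1 - x ∈ J) → 1 - L.prod ∈ J := by
    intro L
    induction L with
    | nil => intro _; simpa using J.zero_mem
    | cons a L ih =>
      intro h
      have h1 : 1 - a ∈ J := h a (by simp)
      have h2 : 1 - L.prod ∈ J := ih fun x hx => h x (by simp [hx])
      have h3 : 1 - (a :: L).prod = (1 - a) + a * (1 - L.prod) := by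
        rw [List.prod_cons]; noncomm_ring
      rw [h3]
      exact J.add_mem h1 (J.mul_mem_left _ _ h2)
  have hpJ : 1 - p ∈ J := by
    refine honeList l ?_
    intro x hx
    rw [hl] at hx
    simp only [List.mem_map, List.mem_range] at hx
    obtain ⟨i, _, rfl⟩ := hx
    exact hfsub i
  -- `α^k(p) ∈ J` for `1 ≤ k ≤ n`
  have hkp : ∀ k : ℕ, 1 ≤ k → k ≤ n → (⇑α)^[k] p ∈ J := by
    intro k h1 h2
    obtain ⟨A, B, hAB⟩ := hsplit (k - 1) (by omega)
    have hmem : zpowIter α (((k - 1 : ℕ) : ℤ) + 1) (f (k - 1)) ∈ J := hfJ (k - 1)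
    rw [show ((k - 1 : ℕ) : ℤ) + 1 = (k : ℤ) from by omega] at hmem
    rw [← zpI_natCast α k, hAB, zpI_mul, zpI_mul]
    exact J.mul_mem_right _ _ (J.mul_mem_left _ _ hmem)
  -- core orthogonality of `p`
  have hporth : ∀ m : ℤ, m ≠ 0 → m.natAbs ≤ 2 * n → ∀ c : C,
      p * c * zpowIter α m p = 0 := by
    intro m hm hle c
    obtain ⟨A, B, hAB⟩ := hsplit (m.natAbs - 1) (by omega)
    have hkey := hforth (m.natAbs - 1) m (by omega) (B * c * zpowIter α m A)
    have hre : p * c * zpowIter α m p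
        = A * (f (m.natAbs - 1) * (B * c * zpowIter α m A)
            * zpowIter α m (f (m.natAbs - 1))) * zpowIter α m B := by
      rw [hAB]; simp only [zpI_mul, mul_assoc]
    rw [hre, hkey, mul_zero, zero_mul]
  -- the generating set and the ideal
  set Sgen : Set C := {z | ∃ x y : C, x * p * y = z} with hSgen
  set M : AddSubmonoid C := AddSubmonoid.closure Sgen with hM
  have hMleft : ∀ a : C, ∀ x ∈ M, a * x ∈ M := by
    intro a x hx
    refine AddSubmonoid.closure_induction (motive := fun x _ => a * x ∈ M) ?_ ?_ ?_ hx
    · rintro z ⟨u, v, rfl⟩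
      exact AddSubmonoid.subset_closure ⟨a * u, v, by simp only [mul_assoc]⟩
    · show a * 0 ∈ M; rw [mul_zero]; exact M.zero_mem
    · intro x y _ _ h1 h2
      have h1' : a * x ∈ M := h1
      have h2' : a * y ∈ M := h2
      show a * (x + y) ∈ M
      rw [mul_add]; exact M.add_mem h1' h2'
  have hMright : ∀ a : C, ∀ x ∈ M, x * a ∈ M := by
    intro a x hx
    refine AddSubmonoid.closure_induction (motive := fun x _ => x * a ∈ M) ?_ ?_ ?_ hx
    · rintro z ⟨u, v, rfl⟩
      exact AddSubmonoid.subset_closure ⟨u, v * a, by simp only [mul_assoc]⟩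
    · show (0 : C) * a ∈ M; rw [zero_mul]; exact M.zero_mem
    · intro x y _ _ h1 h2
      have h1' : x * a ∈ M := h1
      have h2' : y * a ∈ M := h2
      show (x + y) * a ∈ M
      rw [add_mul]; exact M.add_mem h1' h2'
  have hMneg : ∀ x ∈ M, -x ∈ M := by
    intro x hx
    refine AddSubmonoid.closure_induction (motive := fun x _ => -x ∈ M) ?_ ?_ ?_ hx
    · rintro z ⟨u, v, rfl⟩
      exact AddSubmonoid.subset_closure ⟨-u, v, by simp only [neg_mul]⟩
    · show -(0 : C) ∈ M; rw [neg_zero]; exact M.zero_mem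
    · intro x y _ _ h1 h2
      have h1' : -x ∈ M := h1
      have h2' : -y ∈ M := h2
      show -(x + y) ∈ M
      rw [neg_add]; exact M.add_mem h1' h2'
  set Icar : Set C := closure (M : Set C) with hIcar
  have hstab : ∀ q : C → C, Continuous q → (∀ x ∈ M, q x ∈ M) →
      ∀ x ∈ Icar, q x ∈ Icar := by
    intro q hq hqM x hx
    have h1 : q x ∈ closure (q '' (M : Set C)) :=
      image_closure_subset_closure_image hq ⟨x, hx, rfl⟩
    exact closure_mono (by rintro _ ⟨y, hy, rfl⟩; exact hqM y hy) h1
  refine ⟨TwoSidedIdeal.mk' Icar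
    (subset_closure M.zero_mem)
    (fun {x y} hx hy => map_mem_closure₂ continuous_add hx hy
      fun a ha b hb => M.add_mem ha hb)
    (fun {x} hx => hstab (fun z => -z) continuous_neg hMneg x hx)
    (fun {x y} hy => hstab (fun z => x * z) (continuous_const.mul continuous_id)
      (hMleft x) y hy)
    (fun {x y} hx => hstab (fun z => z * y) (continuous_id.mul continuous_const)
      (hMright y) x hx), ?_, ?_, ?_, ?_⟩
  · rw [TwoSidedIdeal.coe_mk']
    exact isClosed_closure
  · rw [TwoSidedIdeal.coe_mk']
    intro x hx
    simp only [Set.mem_iInter]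
    intro k hk
    rw [Finset.mem_Icc] at hk
    have himg : (⇑α.symm)^[k] '' (J : Set C) = (⇑α)^[k] ⁻¹' (J : Set C) := by
      ext z
      constructor
      · rintro ⟨w, hw, rfl⟩
        simpa [iterCancelA] using hw
      · intro hz
        exact ⟨(⇑α)^[k] z, hz, iterCancelB α k z⟩
    rw [himg]
    refine closure_minimal ?_
      (hJclosed.preimage ((StarAlgEquiv.isometry α).continuous.iterate k)) hx
    intro z hz
    refine AddSubmonoid.closure_induction (motive := fun z _ => (⇑α)^[k] z ∈ J) ?_ ?_ ?_ hz
    · rintro w ⟨u, v, rfl⟩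
      show (⇑α)^[k] (u * p * v) ∈ J
      rw [iterMul, iterMul]
      exact J.mul_mem_right _ _ (J.mul_mem_left _ _ (hkp k hk.1 hk.2))
    · show (⇑α)^[k] (0 : C) ∈ J; rw [iterZero]; exact J.zero_mem
    · intro x y _ _ h1 h2
      have h1' : (⇑α)^[k] x ∈ J := h1
      have h2' : (⇑α)^[k] y ∈ J := h2
      show (⇑α)^[k] (x + y) ∈ J
      rw [iterAdd]; exact J.add_mem h1' h2'
  · intro j k hj hjn hk hkn hjk a ha b hb
    rw [TwoSidedIdeal.coe_mk'] at ha hb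
    obtain ⟨x, hx, rfl⟩ := ha
    obtain ⟨y, hy, rfl⟩ := hb
    have hm0 : k - j ≠ 0 := by omega
    have hmabs : (k - j).natAbs ≤ 2 * n := by omega
    have hcore : ∀ x ∈ M, ∀ y ∈ M, x * zpowIter α (k - j) y = 0 := by
      intro x hx
      refine AddSubmonoid.closure_induction
        (motive := fun x _ => ∀ y ∈ M, x * zpowIter α (k - j) y = 0) ?_ ?_ ?_ hx
      · rintro w ⟨u, v, rfl⟩ y hy
        refine AddSubmonoid.closure_induction
          (motive := fun y _ => (u * p * v) * zpowIter α (k - j) y = 0) ?_ ?_ ?_ hy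
        · rintro w' ⟨u', v', rfl⟩
          show (u * p * v) * zpowIter α (k - j) (u' * p * v') = 0
          have h1 := hporth (k - j) hm0 hmabs (v * zpowIter α (k - j) u')
          have hre : (u * p * v) * zpowIter α (k - j) (u' * p * v')
              = u * (p * (v * zpowIter α (k - j) u') * zpowIter α (k - j) p)
                * zpowIter α (k - j) v' := by
            simp only [zpI_mul, mul_assoc]
          rw [hre, h1, mul_zero, zero_mul]
        · show (u * p * v) * zpowIter α (k - j) 0 = 0
          rw [zpI_zero, mul_zero]
        · intro y1 y2 _ _ h1 h2
          have h1' : (u * p * v) * zpowIter α (k - j) y1 = 0 := h1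
          have h2' : (u * p * v) * zpowIter α (k - j) y2 = 0 := h2
          show (u * p * v) * zpowIter α (k - j) (y1 + y2) = 0
          rw [zpI_add, mul_add, h1', h2', add_zero]
      · intro y hy
        show (0 : C) * zpowIter α (k - j) y = 0
        rw [zero_mul]
      · intro x1 x2 _ _ h1 h2 y hy
        have h1' : x1 * zpowIter α (k - j) y = 0 := h1 y hy
        have h2' : x2 * zpowIter α (k - j) y = 0 := h2 y hy
        show (x1 + x2) * zpowIter α (k - j) y = 0
        rw [add_mul, h1', h2', add_zero]
    have hcl : x * zpowIter α (k - j) y = 0 := by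
      have hset : closure ((M : Set C) ×ˢ (M : Set C)) ⊆
          {q : C × C | q.1 * zpowIter α (k - j) q.2 = 0} := by
        refine closure_minimal ?_ ?_
        · rintro ⟨x', y'⟩ ⟨hx', hy'⟩
          exact hcore x' hx' y' hy'
        · exact isClosed_eq
            (continuous_fst.mul ((zpI_cont α (k - j)).comp continuous_snd))
            continuous_const
      have hmem : (x, y) ∈ closure ((M : Set C) ×ˢ (M : Set C)) := by
        rw [closure_prod_eq]; exact ⟨hx, hy⟩
      exact hset hmem
    calc zpowIter α j x * zpowIter α k y
        = zpowIter α j x * zpowIter α j (zpowIter α (k - j) y) := by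
          rw [zpI_comp, show j + (k - j) = k from by ring]
      _ = zpowIter α j (x * zpowIter α (k - j) y) := (zpI_mul α j _ _).symm
      _ = 0 := by rw [hcl, zpI_zero]
  · intro c
    refine ⟨(1 - p) * c, J.mul_mem_right _ _ hpJ, p * c, ?_, by noncomm_ring⟩
    rw [TwoSidedIdeal.mem_mk']
    exact subset_closure (AddSubmonoid.subset_closure ⟨1, c, by rw [one_mul]⟩)
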